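/- Let I₀ be an infinite index set and F a family of subsets of I₀. Define J ∈ Cl(F) iff J ∈ F or for every finite J₀ ⊆ I₀ there are infinitely many I ∈ F with I ∩ J₀ = J ∩ J₀. If F' ⊆ F is an infinite chain under inclusion and J = ⋃ F' (or J = ⋂ F') with J ∉ F, then J ∈ Cl(F). -/

import Mathlib

/-- Combinatorial closure on families of index sets (Corollary 4.7 of the paper):
`J` is in the closure of `F` iff `J ∈ F` or for every finite `J₀` infinitely many
members of `F` agree with `J` on `J₀`. -/
def Cl {I₀ : Type*} (F : Set (Set I₀)) : Set (Set I₀) :=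
  F ∪ {J | ∀ J₀ : Finset I₀, {I ∈ F | I ∩ ↑J₀ = J ∩ ↑J₀}.Infinite}

lemma max_of_finite_chain {α : Type*} {S : Set (Set α)} (hS : S.Finite)
    (hne : S.Nonempty) (hc : IsChain (· ⊆ ·) S) : ∃ M ∈ S, ∀ K ∈ S, K ⊆ M := by
  obtain ⟨M, hM, hmax⟩ := hS.exists_maximalFor id S hne
  refine ⟨M, hM, fun K hK => ?_⟩
  rcases eq_or_ne K M with rfl | hne'
  · exact subset_rfl
  · rcases hc hK hM hne' with h | h
    · exact h
    · exact hmax hK h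

lemma min_of_finite_chain {α : Type*} {S : Set (Set α)} (hS : S.Finite)
    (hne : S.Nonempty) (hc : IsChain (· ⊆ ·) S) : ∃ M ∈ S, ∀ K ∈ S, M ⊆ K := by
  obtain ⟨M, hM, hmin⟩ := hS.exists_minimalFor id S hne
  refine ⟨M, hM, fun K hK => ?_⟩
  rcases eq_or_ne K M with rfl | hne'
  · exact subset_rfl
  · rcases hc hK hM hne' with h | h
    · exact hmin hK h
    · exact h

lemma upset_infinite {α : Type*} {F' : Set (Set α)} (hinf : F'.Infinite)
    (hchain : IsChain (· ⊆ ·) F') (hU : ⋃₀ F' ∉ F') {I : Set α} (hI : I ∈ F') :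
    {K ∈ F' | I ⊆ K}.Infinite := by
  by_contra hfin
  rw [Set.not_infinite] at hfin
  obtain ⟨M, hM, hmax⟩ := max_of_finite_chain hfin ⟨I, hI, subset_rfl⟩
    (hchain.mono (Set.sep_subset _ _))
  have hMmax : ∀ K ∈ F', K ⊆ M := by
    intro K hK
    rcases eq_or_ne K M with rfl | hne'
    · exact subset_rfl
    · rcases hchain hK hM.1 hne' with h | h
      · exact h
      · exact hmax K ⟨hK, hM.2.trans h⟩
  have : ⋃₀ F' = M := subset_antisymm (Set.sUnion_subset hMmax)
    (Set.subset_sUnion_of_mem hM.1)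
  exact hU (this ▸ hM.1)

lemma downset_infinite {α : Type*} {F' : Set (Set α)} (hinf : F'.Infinite)
    (hchain : IsChain (· ⊆ ·) F') (hU : ⋂₀ F' ∉ F') {I : Set α} (hI : I ∈ F') :
    {K ∈ F' | K ⊆ I}.Infinite := by
  by_contra hfin
  rw [Set.not_infinite] at hfin
  obtain ⟨M, hM, hmin⟩ := min_of_finite_chain hfin ⟨I, hI, subset_rfl⟩
    (hchain.mono (Set.sep_subset _ _))
  have hMmin : ∀ K ∈ F', M ⊆ K := by
    intro K hK
    rcases eq_or_ne K M with rfl | hne'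
    · exact subset_rfl
    · rcases hchain hK hM.1 hne' with h | h
      · exact hmin K ⟨hK, h.trans hM.2⟩
      · exact h
  have : ⋂₀ F' = M := subset_antisymm (Set.sInter_subset_of_mem hM.1)
    (Set.subset_sInter hMmin)
  exact hU (this ▸ hM.1)

/-- Corollary 4.7, sufficiency: unions and intersections of infinite chains in
`F` which are not in `F` belong to the closure of `F`. -/
theorem limit_of_chain_mem_Cl {I₀ : Type*} [Infinite I₀]
    (F F' : Set (Set I₀)) (J : Set I₀)
    (hsub : F' ⊆ F) (hinf : F'.Infinite) (hchain : IsChain (· ⊆ ·) F')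
    (hJ : J = ⋃₀ F' ∨ J = ⋂₀ F') (hnot : J ∉ F) :
    J ∈ Cl F := by
  have hJF' : J ∉ F' := fun h => hnot (hsub h)
  refine Or.inr fun J₀ => ?_
  rcases hJ with rfl | rfl
  · -- union case
    -- find I* ∈ F' containing (⋃₀ F') ∩ J₀
    have hfinpts : ((⋃₀ F') ∩ ↑J₀).Finite := J₀.finite_toSet.inter_of_right _
    have hcover : ∀ s : Finset I₀, ↑s ⊆ ⋃₀ F' → ∃ I ∈ F', ↑s ⊆ I := by
      classical
      intro s
      induction s using Finset.induction_on with
      | empty =>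
          intro _
          obtain ⟨I, hI⟩ := hinf.nonempty
          exact ⟨I, hI, by simp⟩
      | @insert a s ha ih =>
          intro hsub'
          rw [Finset.coe_insert, Set.insert_subset_iff] at hsub'
          obtain ⟨I, hI, hIs⟩ := ih hsub'.2
          obtain ⟨K, hK, haK⟩ := hsub'.1
          obtain ⟨L, hL, hIL, hKL⟩ := hchain.directedOn I hI K hK
          exact ⟨L, hL, by
            rw [Finset.coe_insert, Set.insert_subset_iff]
            exact ⟨hKL haK, hIs.trans hIL⟩⟩
    obtain ⟨I, hI, hIsub⟩ := hcover hfinpts.toFinset (by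
      intro x hx
      exact (hfinpts.mem_toFinset.mp hx).1)
    have hIsub' : (⋃₀ F') ∩ ↑J₀ ⊆ I := by
      intro x hx
      exact hIsub (hfinpts.mem_toFinset.mpr hx)
    refine ((upset_infinite hinf hchain hJF' hI).mono ?_)
    rintro K ⟨hK, hIK⟩
    refine ⟨hsub hK, subset_antisymm ?_ ?_⟩
    · exact Set.inter_subset_inter_left _ (Set.subset_sUnion_of_mem hK)
    · intro x hx
      exact ⟨hIK (hIsub' hx), hx.2⟩
  · -- intersection case
    have hfinpts : ((↑J₀ : Set I₀) \ ⋂₀ F').Finite := J₀.finite_toSet.diff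
    have hcover : ∀ s : Finset I₀, (↑s : Set I₀) ⊆ ↑J₀ \ ⋂₀ F' →
        ∃ I ∈ F', ∀ x ∈ s, x ∉ I := by
      classical
      intro s
      induction s using Finset.induction_on with
      | empty =>
          intro _
          obtain ⟨I, hI⟩ := hinf.nonempty
          exact ⟨I, hI, by simp⟩
      | @insert a s ha ih =>
          intro hsub'
          rw [Finset.coe_insert, Set.insert_subset_iff] at hsub'
          obtain ⟨I, hI, hIs⟩ := ih hsub'.2
          have : a ∉ ⋂₀ F' := hsub'.1.2
          rw [Set.mem_sInter] at this
          push_neg at this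
          obtain ⟨K, hK, haK⟩ := this
          obtain ⟨L, hL, hLI, hLK⟩ : ∃ L ∈ F', L ⊆ I ∧ L ⊆ K := by
            rcases eq_or_ne I K with rfl | hne'
            · exact ⟨I, hI, subset_rfl, subset_rfl⟩
            · rcases hchain hI hK hne' with h | h
              · exact ⟨I, hI, subset_rfl, h⟩
              · exact ⟨K, hK, h, subset_rfl⟩
          refine ⟨L, hL, ?_⟩
          intro x hx
          rcases Finset.mem_insert.mp hx with rfl | hx'
          · exact fun hxL => haK (hLK hxL)
          · exact fun hxL => hIs x hx' (hLI hxL)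
    obtain ⟨I, hI, hIavoid⟩ := hcover hfinpts.toFinset (by
      intro x hx
      exact hfinpts.mem_toFinset.mp hx)
    refine ((downset_infinite hinf hchain hJF' hI).mono ?_)
    rintro K ⟨hK, hKI⟩
    refine ⟨hsub hK, subset_antisymm ?_ ?_⟩
    · rintro x ⟨hxK, hxJ₀⟩
      refine ⟨?_, hxJ₀⟩
      by_contra hxnot
      exact hIavoid x (hfinpts.mem_toFinset.mpr ⟨hxJ₀, hxnot⟩) (hKI hxK)
    · exact Set.inter_subset_inter_left _ (Set.sInter_subset_of_mem hK)
  done
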